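/- Suppose the n×n×T array X has entries x_{ijt} = θ_i^T Λ_t φ_j + β_{it} + α_{jt}, and suppose α = U_α V_α^T with U_α ∈ ℝ^{n×k_α}, V_α ∈ ℝ^{T×k_α}. Then the mode-2 unfolding of X admits the rank factorization M2(X) = U2 · V2^T, where U2 = (Φ, U_α, 1_n) ∈ ℝ^{n×(k2+k_α+1)} is formed by concatenating columns, and V2 = ((I_T⊗Θ) M2(S)^T, (I_T⊗1_n) V_α, vec(β)) ∈ ℝ^{(nT)×(k2+k_α+1)}. Equivalently, M2(X) = Φ M2(S)(I_T ⊗ Θ^T) + α(I_T ⊗ 1_n^T) + 1_n vec(β)^T. -/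

import Mathlib

open Matrix Kronecker

/-- Mode-2 unfolding of a 3-way array: rows indexed by the second mode,
columns by pairs `(t, i)` from the third and first modes. -/
def mode2 {d1 d2 d3 : ℕ} (X : Fin d1 → Fin d2 → Fin d3 → ℝ) :
    Matrix (Fin d2) (Fin d3 × Fin d1) ℝ :=
  Matrix.of fun j p => X p.2 j p.1

/-- The matrix `I_T ⊗ 1_nᵀ ∈ ℝ^{T × (nT)}` (identity Kronecker all-ones row). -/
def idKronOnesRow (T n : ℕ) : Matrix (Fin T) (Fin T × Fin n) ℝ :=
  Matrix.reindex (Equiv.prodPUnit (Fin T)) (Equiv.refl _)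
    ((1 : Matrix (Fin T) (Fin T) ℝ) ⊗ₖ (Matrix.of fun (_ : PUnit.{1}) (_ : Fin n) => (1 : ℝ)))

/-- The matrix `I_T ⊗ 1_n ∈ ℝ^{(nT) × T}` (identity Kronecker all-ones column). -/
def idKronOnesCol (T n : ℕ) : Matrix (Fin T × Fin n) (Fin T) ℝ :=
  Matrix.reindex (Equiv.refl _) (Equiv.prodPUnit (Fin T))
    ((1 : Matrix (Fin T) (Fin T) ℝ) ⊗ₖ (Matrix.of fun (_ : Fin n) (_ : PUnit.{1}) => (1 : ℝ)))

/-- for the multilayer latent space array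
`x_{ijt} = θ_iᵀ Λ_t φ_j + β_{it} + α_{jt}` with `α = U_α V_αᵀ`, the mode-2 unfolding
factorizes as `M2(X) = U2 · V2ᵀ` with `U2 = (Φ, U_α, 1_n)` and
`V2 = ((I_T ⊗ Θ) M2(S)ᵀ, (I_T ⊗ 1_n) V_α, vec(β))`; equivalently,
`M2(X) = Φ M2(S)(I_T ⊗ Θᵀ) + α (I_T ⊗ 1_nᵀ) + 1_n vec(β)ᵀ`. -/
theorem mode2_unfolding_factorization {n T k1 k2 kα : ℕ}
    (Θ : Matrix (Fin n) (Fin k1) ℝ) (Φ : Matrix (Fin n) (Fin k2) ℝ)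
    (Λ : Fin T → Matrix (Fin k1) (Fin k2) ℝ)
    (α β : Matrix (Fin n) (Fin T) ℝ)
    (Uα : Matrix (Fin n) (Fin kα) ℝ) (Vα : Matrix (Fin T) (Fin kα) ℝ)
    (hα : α = Uα * Vαᵀ)
    (X : Fin n → Fin n → Fin T → ℝ)
    (hX : ∀ i j t, X i j t = Θ i ⬝ᵥ (Λ t *ᵥ Φ j) + β i t + α j t)
    (S : Fin k1 → Fin k2 → Fin T → ℝ) (hS : ∀ a b t, S a b t = Λ t a b) :
    mode2 X =
      Matrix.fromCols
        (Matrix.fromCols Φ Uα) (Matrix.of fun (_ : Fin n) (_ : PUnit.{1}) => (1 : ℝ)) *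
      (Matrix.fromCols
        (Matrix.fromCols (((1 : Matrix (Fin T) (Fin T) ℝ) ⊗ₖ Θ) * (mode2 S)ᵀ)
          (idKronOnesCol T n * Vα))
        (Matrix.of fun (p : Fin T × Fin n) (_ : PUnit.{1}) => β p.2 p.1))ᵀ ∧
    mode2 X =
      Φ * mode2 S * ((1 : Matrix (Fin T) (Fin T) ℝ) ⊗ₖ Θᵀ) + α * idKronOnesRow T n +
        Matrix.vecMulVec (fun (_ : Fin n) => (1 : ℝ)) (fun p : Fin T × Fin n => β p.2 p.1) := by
  subst hα
  constructor
  · ext j ⟨t, i⟩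
    simp [mode2, hX, hS, idKronOnesRow, idKronOnesCol, Matrix.mul_apply,
      Matrix.fromCols, Matrix.vecMulVec_apply, dotProduct, Matrix.mulVec,
      Fintype.sum_prod_type, Finset.mul_sum, Finset.sum_mul, Matrix.one_apply, ite_and]
    simp only [mul_comm, mul_left_comm]
    conv_rhs => rw [Finset.sum_comm]
    ring
  · ext j ⟨t, i⟩
    simp [mode2, hX, hS, idKronOnesRow, idKronOnesCol, Matrix.mul_apply,
      Matrix.fromCols, Matrix.vecMulVec_apply, dotProduct, Matrix.mulVec,
      Fintype.sum_prod_type, Finset.mul_sum, Finset.sum_mul, Matrix.one_apply, ite_and]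
    simp only [mul_comm, mul_left_comm]
    ring
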